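/- Let f be a sigmoidal efficiency function with γ* the unique positive solution of f(γ) = γ f′(γ), let c > 0, let γ̃ > 0 be a target SIR, and let P_max > 0 satisfy γ̃/c ≤ P_max (the delay requirement is achievable). Define the delay-constrained utility ũ(p) = f(cp)/p if cp ≥ γ̃ and ũ(p) = 0 if cp < γ̃, for p ∈ (0, P_max]. Then ũ attains its maximum over (0, P_max] at the unique point p̃* = min{ max{γ̃, γ*}/c , P_max }, and this maximizer is unique. -/

import Mathlib

open Classical

/-- For a sigmoidal efficiency function `f` with `γ*` the unique positive
solution of `f γ = γ f' γ`, a target SIR `γ̃ > 0` achievable within the power limit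
(`γ̃/c ≤ P_max`), the delay-constrained utility `ũ(p) = f(c p)/p` if `c p ≥ γ̃`,
`ũ(p) = 0` otherwise, attains its maximum over `(0, P_max]` at the unique point
`p̃* = min (max γ̃ γ* / c) P_max`. -/
theorem delay_constrained_utility_maximizer (f f' f'' : ℝ → ℝ)
    (hcontf : ContinuousOn f (Set.Ici 0))
    (hderiv : ∀ x : ℝ, 0 < x → HasDerivAt f (f' x) x)
    (hcontf' : ContinuousOn f' (Set.Ioi 0))
    (hderiv2 : ∀ x : ℝ, 0 < x → HasDerivAt f' (f'' x) x)
    (hf0 : f 0 = 0)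
    (hf'pos : ∀ x : ℝ, 0 < x → 0 < f' x)
    (hrange : ∀ x : ℝ, 0 ≤ x → 0 ≤ f x ∧ f x < 1)
    (hlim : Filter.Tendsto f Filter.atTop (nhds 1))
    (a : ℝ) (ha : 0 < a)
    (hconvex : ∀ x : ℝ, 0 < x → x < a → 0 < f'' x)
    (hconcave : ∀ x : ℝ, a < x → f'' x < 0)
    (g : ℝ) (hg : 0 < g) (hgeq : f g = g * f' g)
    (hguniq : ∀ g' : ℝ, 0 < g' → f g' = g' * f' g' → g' = g)
    (c : ℝ) (hc : 0 < c)
    (γt : ℝ) (hγt : 0 < γt)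
    (Pmax : ℝ) (hPmax : 0 < Pmax) (hfeas : γt / c ≤ Pmax) :
    (∀ p ∈ Set.Ioc (0 : ℝ) Pmax,
        (if γt ≤ c * p then f (c * p) / p else 0) ≤
        (if γt ≤ c * min (max γt g / c) Pmax
          then f (c * min (max γt g / c) Pmax) / min (max γt g / c) Pmax else 0)) ∧
    (∀ p ∈ Set.Ioc (0 : ℝ) Pmax, p ≠ min (max γt g / c) Pmax →
        (if γt ≤ c * p then f (c * p) / p else 0) <
        (if γt ≤ c * min (max γt g / c) Pmax
          then f (c * min (max γt g / c) Pmax) / min (max γt g / c) Pmax else 0)) := by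
  -- f is strictly increasing on [0, ∞), hence positive on (0, ∞)
  have hfstrict : StrictMonoOn f (Set.Ici 0) := by
    apply strictMonoOn_of_deriv_pos (convex_Ici 0) hcontf
    intro x hx
    rw [interior_Ici] at hx
    rw [(hderiv x hx).deriv]
    exact hf'pos x hx
  have hfpos : ∀ x : ℝ, 0 < x → 0 < f x := fun x hx => by
    have := hfstrict Set.self_mem_Ici (Set.mem_Ici.2 hx.le) hx
    rwa [hf0] at this
  -- the auxiliary function φ(x) = x f'(x) - f(x)
  set φ : ℝ → ℝ := fun x => x * f' x - f x with hφdef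
  have hφderiv : ∀ x : ℝ, 0 < x → HasDerivAt φ (x * f'' x) x := by
    intro x hx
    have h1 := ((hasDerivAt_id x).mul (hderiv2 x hx)).sub (hderiv x hx)
    refine h1.congr_deriv ?_
    simp only [id_eq]
    ring
  have hφcont : ContinuousOn φ (Set.Ioi 0) := fun x hx =>
    ((hφderiv x hx).continuousAt).continuousWithinAt
  -- f' strictly increasing on (0, a]
  have hf'mono : StrictMonoOn f' (Set.Ioc 0 a) := by
    apply strictMonoOn_of_deriv_pos (convex_Ioc 0 a)
      (hcontf'.mono (fun y hy => hy.1))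
    intro x hx
    rw [interior_Ioc] at hx
    rw [(hderiv2 x hx.1).deriv]
    exact hconvex x hx.1 hx.2
  -- φ > 0 on (0, a]
  have hφpos_a : ∀ x ∈ Set.Ioc (0:ℝ) a, 0 < φ x := by
    intro x hx
    obtain ⟨hx0, hxa⟩ := hx
    obtain ⟨ξ, hξ, hξeq⟩ := exists_hasDerivAt_eq_slope f f' hx0
      (hcontf.mono (fun y hy => hy.1))
      (fun y hy => hderiv y hy.1)
    have hξx : f' ξ < f' x := hf'mono ⟨hξ.1, hξ.2.le.trans hxa⟩ ⟨hx0, hxa⟩ hξ.2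
    have hfx : f x = x * f' ξ := by
      rw [hξeq, hf0]
      field_simp
      ring
    simp only [hφdef]
    nlinarith
  have hφg : φ g = 0 := by
    simp only [hφdef]
    linarith [hgeq]
  -- φ strictly decreasing on [a, ∞)
  have hφanti : StrictAntiOn φ (Set.Ici a) := by
    apply strictAntiOn_of_deriv_neg (convex_Ici a)
      (hφcont.mono (fun y hy => lt_of_lt_of_le ha hy))
    intro x hx
    rw [interior_Ici] at hx
    rw [(hφderiv x (ha.trans hx)).deriv]
    exact mul_neg_of_pos_of_neg (ha.trans hx) (hconcave x hx)
  have hag : a < g := by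
    by_contra h
    push_neg at h
    have := hφpos_a g ⟨hg, h⟩
    rw [hφg] at this
    exact lt_irrefl 0 this
  have hφpos : ∀ x : ℝ, 0 < x → x < g → 0 < φ x := by
    intro x hx0 hxg
    rcases le_or_gt x a with hxa | hax
    · exact hφpos_a x ⟨hx0, hxa⟩
    · have := hφanti (Set.mem_Ici.2 hax.le) (Set.mem_Ici.2 hag.le) hxg
      rwa [hφg] at this
  have hφneg : ∀ x : ℝ, g < x → φ x < 0 := by
    intro x hgx
    have := hφanti (Set.mem_Ici.2 hag.le) (Set.mem_Ici.2 (hag.trans hgx).le) hgx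
    rwa [hφg] at this
  -- the function h(x) = f(x)/x
  set h : ℝ → ℝ := fun x => f x / x with hhdef
  have hhderiv : ∀ x : ℝ, 0 < x → HasDerivAt h (φ x / x ^ 2) x := by
    intro x hx
    have h1 := (hderiv x hx).div (hasDerivAt_id x) (ne_of_gt hx)
    refine h1.congr_deriv ?_
    simp only [hφdef, id_eq]
    ring
  have hhcont : ∀ x : ℝ, 0 < x → ContinuousAt h x := fun x hx =>
    (hhderiv x hx).continuousAt
  -- h strictly increasing on (0, g]
  have hhmono : StrictMonoOn h (Set.Ioc 0 g) := by
    apply strictMonoOn_of_deriv_pos (convex_Ioc 0 g)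
      (fun x hx => (hhcont x hx.1).continuousWithinAt)
    intro x hx
    rw [interior_Ioc] at hx
    rw [(hhderiv x hx.1).deriv]
    exact div_pos (hφpos x hx.1 hx.2) (pow_pos hx.1 2)
  -- h strictly decreasing on [g, ∞)
  have hhanti : StrictAntiOn h (Set.Ici g) := by
    apply strictAntiOn_of_deriv_neg (convex_Ici g)
      (fun x hx => (hhcont x (lt_of_lt_of_le hg hx)).continuousWithinAt)
    intro x hx
    rw [interior_Ici] at hx
    rw [(hhderiv x (hg.trans hx)).deriv]
    exact div_neg_of_neg_of_pos (hφneg x hx) (pow_pos (hg.trans hx) 2)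
  -- the claimed maximizer
  set p' : ℝ := min (max γt g / c) Pmax with hp'def
  have hmgc : 0 < max γt g / c := div_pos (lt_of_lt_of_le hγt (le_max_left _ _)) hc
  have hp'pos : 0 < p' := lt_min hmgc hPmax
  have hcPmax : γt ≤ c * Pmax := by
    have := (div_le_iff₀ hc).mp hfeas
    linarith
  have hcmax : c * (max γt g / c) = max γt g := by field_simp
  have hcp' : c * p' = min (max γt g) (c * Pmax) := by
    rw [hp'def, mul_min_of_nonneg _ _ hc.le, hcmax]
  have hγt_le : γt ≤ c * p' := by
    rw [hcp']
    exact le_min (le_max_left _ _) hcPmax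
  -- the key strict comparison at the level of h
  have hkey : ∀ x : ℝ, γt ≤ x → x ≤ c * Pmax → x ≠ c * p' → h x < h (c * p') := by
    intro x hγx hxP hne
    have hx0 : 0 < x := lt_of_lt_of_le hγt hγx
    rcases le_or_gt (max γt g) (c * Pmax) with hcase | hcase
    · -- c * p' = max γt g
      have hxeq : c * p' = max γt g := by rw [hcp', min_eq_left hcase]
      rcases le_total γt g with hγg | hgγ
      · -- maximizer at g
        have hxg : c * p' = g := by rw [hxeq, max_eq_right hγg]
        rw [hxg] at hne ⊢
        rcases le_or_gt x g with hxle | hgx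
        · exact hhmono ⟨hx0, hxle⟩ ⟨hg, le_refl g⟩ (lt_of_le_of_ne hxle hne)
        · exact hhanti (Set.self_mem_Ici) (Set.mem_Ici.2 hgx.le) hgx
      · -- maximizer at γt, with g ≤ γt
        have hxg : c * p' = γt := by rw [hxeq, max_eq_left hgγ]
        rw [hxg] at hne ⊢
        have hγx' : γt < x := lt_of_le_of_ne hγx (Ne.symm hne)
        exact hhanti (Set.mem_Ici.2 hgγ) (Set.mem_Ici.2 (hgγ.trans hγx)) hγx'
    · -- c * p' = c * Pmax < max γt g, so max γt g = g
      have hxeq : c * p' = c * Pmax := by rw [hcp', min_eq_right hcase.le]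
      have hgmax : max γt g = g := by
        rcases max_cases γt g with ⟨h1, h2⟩ | ⟨h1, h2⟩
        · exfalso; rw [h1] at hcase; linarith
        · exact h1
      rw [hgmax] at hcase
      rw [hxeq] at hne ⊢
      have hxlt : x < c * Pmax := lt_of_le_of_ne hxP hne
      exact hhmono ⟨hx0, (hxlt.trans hcase).le⟩ ⟨lt_of_lt_of_le hγt hcPmax, hcase.le⟩ hxlt
  -- rewrite utilities in terms of h
  have hval : ∀ p : ℝ, 0 < p → f (c * p) / p = c * h (c * p) := by
    intro p hp
    simp only [hhdef]
    field_simp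
  have hstrict : ∀ p ∈ Set.Ioc (0 : ℝ) Pmax, p ≠ p' →
      (if γt ≤ c * p then f (c * p) / p else 0) < f (c * p') / p' := by
    intro p hp hne
    by_cases hcond : γt ≤ c * p
    · rw [if_pos hcond, hval p hp.1, hval p' hp'pos]
      have hne' : c * p ≠ c * p' := fun hcontra => hne (mul_left_cancel₀ (ne_of_gt hc) hcontra)
      have := hkey (c * p) hcond (by nlinarith [hp.2]) hne'
      nlinarith
    · rw [if_neg hcond]
      exact div_pos (hfpos _ (mul_pos hc hp'pos)) hp'pos
  constructor
  · intro p hp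
    rw [if_pos hγt_le]
    by_cases hpe : p = p'
    · rw [hpe, if_pos hγt_le]
    · exact (hstrict p hp hpe).le
  · intro p hp hne
    rw [if_pos hγt_le]
    exact hstrict p hp hne
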